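/- Let n be a natural number and let a_0 ≥ a_1 ≥ … ≥ a_n be positive real numbers. Define τ_n = ∫_0^∞ ∏_{k=0}^n sinc(a_k t) dt. Then τ_0 = π/(2·a_0), and more generally τ_n = π/(2·a_0) for every n such that ∑_{k=1}^n a_k ≤ a_0. -/

import Mathlib

open MeasureTheory Filter Real Finset

open intervalIntegral Set

noncomputable def sinc (t : ℝ) : ℝ := if t = 0 then 1 else Real.sin t / t

lemma sinc_zero : _root_.sinc 0 = 1 := if_pos rfl

lemma sinc_of_ne (t : ℝ) (h : t ≠ 0) : _root_.sinc t = Real.sin t / t := if_neg h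

lemma abs_sinc_le_one (t : ℝ) : |_root_.sinc t| ≤ 1 := by
  rcases eq_or_ne t 0 with rfl | h
  · simp [_root_.sinc]
  · rw [sinc_of_ne t h, abs_div]
    rw [div_le_one (abs_pos.2 h)]
    exact Real.abs_sin_le_abs

lemma continuous_sinc : Continuous _root_.sinc := by
  rw [continuous_iff_continuousAt]
  intro x
  rcases eq_or_ne x 0 with rfl | h
  · rw [← continuousWithinAt_compl_self]
    have h1 : Tendsto (slope Real.sin 0) (nhdsWithin 0 {(0:ℝ)}ᶜ) (nhds 1) := by
      have := (Real.hasDerivAt_sin 0)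
      rw [hasDerivAt_iff_tendsto_slope] at this
      simpa using this
    unfold ContinuousWithinAt
    rw [_root_.sinc_zero]
    apply h1.congr'
    filter_upwards [self_mem_nhdsWithin] with y hy
    simp only [Set.mem_compl_iff, Set.mem_singleton_iff] at hy
    rw [sinc_of_ne y hy]
    simp [slope, div_eq_inv_mul]
  · have : ContinuousAt (fun t => Real.sin t / t) x :=
      (Real.continuous_sin.continuousAt).div continuousAt_id h
    apply this.congr
    filter_upwards [isOpen_compl_singleton.mem_nhds h] with y hy
    simp only [Set.mem_compl_iff, Set.mem_singleton_iff] at hy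
    rw [sinc_of_ne y hy]

lemma sinc_even (t : ℝ) : _root_.sinc (-t) = _root_.sinc t := by
  rcases eq_or_ne t 0 with rfl | h
  · simp
  · rw [sinc_of_ne t h, sinc_of_ne _ (neg_ne_zero.2 h), Real.sin_neg, neg_div_neg_eq]

noncomputable def Si (x : ℝ) : ℝ := ∫ t in (0:ℝ)..x, _root_.sinc t

lemma intervalIntegrable_sinc (a b : ℝ) : IntervalIntegrable _root_.sinc volume a b :=
  _root_.continuous_sinc.intervalIntegrable a b

lemma integrableOn_cos_div_sq : IntegrableOn (fun t : ℝ => Real.cos t / t^2) (Ioi 1) := by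
  apply (integrableOn_Ioi_rpow_of_lt (by norm_num : (-2:ℝ) < -1) one_pos).mono'
  · exact (Real.continuous_cos.measurable.div (measurable_id.pow_const 2)).aestronglyMeasurable
  · filter_upwards [ae_restrict_mem measurableSet_Ioi] with t ht
    have ht1 : (1:ℝ) < t := ht
    have ht0 : (0:ℝ) < t := lt_trans one_pos ht1
    rw [Real.norm_eq_abs, abs_div, Real.rpow_neg ht0.le, abs_of_pos (pow_pos ht0 2),
      Real.rpow_two]
    rw [div_le_iff₀ (pow_pos ht0 2)]
    calc |Real.cos t| ≤ 1 := Real.abs_cos_le_one t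
    _ = (t ^ 2)⁻¹ * t ^ 2 := by field_simp



lemma si_parts {R : ℝ} (hR : 1 ≤ R) :
    (∫ t in (1:ℝ)..R, _root_.sinc t) =
      Real.cos 1 - Real.cos R / R - ∫ t in (1:ℝ)..R, Real.cos t / t^2 := by
  have hpos : ∀ x ∈ uIcc (1:ℝ) R, (0:ℝ) < x := by
    intro x hx
    rw [uIcc_of_le hR] at hx
    exact lt_of_lt_of_le one_pos hx.1
  have key := intervalIntegral.integral_mul_deriv_eq_deriv_mul
    (u := fun x : ℝ => x⁻¹) (u' := fun x : ℝ => -(x^2)⁻¹)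
    (v := fun x : ℝ => -Real.cos x) (v' := fun x : ℝ => Real.sin x)
    (a := 1) (b := R)
    (fun x hx => hasDerivAt_inv (hpos x hx).ne')
    (fun x hx => by have h := (Real.hasDerivAt_cos x).neg; rw [neg_neg] at h; exact h)
    (by
      apply ContinuousOn.intervalIntegrable
      intro x hx
      exact (((continuousOn_id.pow 2).inv₀ (fun y hy => (pow_pos (hpos y hy) 2).ne')).neg) x hx)
    (Real.continuous_sin.intervalIntegrable 1 R)
  have h1 : (∫ t in (1:ℝ)..R, _root_.sinc t) = ∫ t in (1:ℝ)..R, t⁻¹ * Real.sin t := by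
    apply intervalIntegral.integral_congr
    intro x hx
    rw [sinc_of_ne x (hpos x hx).ne', div_eq_inv_mul]
  have h2 : (∫ t in (1:ℝ)..R, -(t^2)⁻¹ * -Real.cos t) = ∫ t in (1:ℝ)..R, Real.cos t / t^2 := by
    apply intervalIntegral.integral_congr
    intro x hx
    ring
  rw [h1, key, h2]
  field_simp
  ring

noncomputable def SiLim : ℝ := Si 1 + Real.cos 1 - ∫ t in Set.Ioi (1:ℝ), Real.cos t / t^2

lemma si_eq {R : ℝ} (hR : 1 ≤ R) :
    Si R = Si 1 + Real.cos 1 - Real.cos R / R - ∫ t in (1:ℝ)..R, Real.cos t / t^2 := by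
  have : Si R = Si 1 + ∫ t in (1:ℝ)..R, _root_.sinc t := by
    rw [Si, Si, intervalIntegral.integral_add_adjacent_intervals
      (intervalIntegrable_sinc 0 1) (intervalIntegrable_sinc 1 R)]
  rw [this, si_parts hR]
  ring

lemma tendsto_si : Tendsto Si atTop (nhds SiLim) := by
  have h1 : Tendsto (fun R : ℝ => Real.cos R / R) atTop (nhds 0) := by
    refine squeeze_zero_norm' ?_ tendsto_inv_atTop_zero
    · filter_upwards [eventually_gt_atTop (0:ℝ)] with R hR
      rw [Real.norm_eq_abs, abs_div, abs_of_pos hR, div_le_iff₀ hR, inv_mul_cancel₀ hR.ne']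
      exact Real.abs_cos_le_one R
  have h2 : Tendsto (fun R : ℝ => ∫ t in (1:ℝ)..R, Real.cos t / t^2) atTop
      (nhds (∫ t in Set.Ioi (1:ℝ), Real.cos t / t^2)) :=
    intervalIntegral_tendsto_integral_Ioi 1 integrableOn_cos_div_sq tendsto_id
  have h3 : Tendsto (fun R : ℝ => Si 1 + Real.cos 1 - Real.cos R / R -
      ∫ t in (1:ℝ)..R, Real.cos t / t^2) atTop (nhds SiLim) := by
    rw [SiLim, show Si 1 + Real.cos 1 - (∫ t in Set.Ioi (1:ℝ), Real.cos t / t^2)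
      = Si 1 + Real.cos 1 - 0 - (∫ t in Set.Ioi (1:ℝ), Real.cos t / t^2) by ring]
    exact (tendsto_const_nhds.sub h1).sub h2
  apply h3.congr'
  filter_upwards [eventually_ge_atTop (1:ℝ)] with R hR
  rw [si_eq hR]


lemma abs_si_le : ∀ x : ℝ, |Si x| ≤ 4 := by
  have key : ∀ x : ℝ, 0 ≤ x → |Si x| ≤ 4 := by
    intro x hx
    have sib : ∀ y : ℝ, 0 ≤ y → y ≤ 1 → |Si y| ≤ 1 := by
      intro y hy hy1
      have : ‖∫ t in (0:ℝ)..y, _root_.sinc t‖ ≤ 1 * |y - 0| := by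
        apply intervalIntegral.norm_integral_le_of_norm_le_const
        intro t _
        rw [Real.norm_eq_abs]
        exact _root_.abs_sinc_le_one t
      rw [Real.norm_eq_abs] at this
      calc |Si y| ≤ 1 * |y - 0| := this
      _ ≤ 1 := by rw [sub_zero, one_mul, abs_of_nonneg hy]; exact hy1
    rcases le_or_gt x 1 with h1 | h1
    · linarith [sib x hx h1]
    · rw [si_eq h1.le]
      have b1 : |Si 1| ≤ 1 := sib 1 zero_le_one le_rfl
      have b2 : |Real.cos x / x| ≤ 1 := by
        rw [abs_div, div_le_one (by positivity)]
        exact le_trans (Real.abs_cos_le_one x) (by rw [abs_of_pos (by linarith)]; linarith)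
      have b3 : |∫ t in (1:ℝ)..x, Real.cos t / t^2| ≤ 1 := by
        have hc : ContinuousOn (fun t : ℝ => Real.cos t / t^2) (Set.uIcc 1 x) := by
          apply Real.continuous_cos.continuousOn.div (continuousOn_pow 2)
          intro y hy
          rw [Set.uIcc_of_le h1.le] at hy
          exact (pow_pos (lt_of_lt_of_le one_pos hy.1) 2).ne'
        have hI2 : IntervalIntegrable (fun t : ℝ => (t^2)⁻¹) volume 1 x := by
          apply ContinuousOn.intervalIntegrable
          apply (continuousOn_pow 2).inv₀
          intro y hy
          rw [Set.uIcc_of_le h1.le] at hy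
          exact (pow_pos (lt_of_lt_of_le one_pos hy.1) 2).ne'
        have step1 : |∫ t in (1:ℝ)..x, Real.cos t / t^2|
            ≤ ∫ t in (1:ℝ)..x, |Real.cos t / t^2| :=
          intervalIntegral.abs_integral_le_integral_abs h1.le
        have step2 : (∫ t in (1:ℝ)..x, |Real.cos t / t^2|)
            ≤ ∫ t in (1:ℝ)..x, (t^2)⁻¹ := by
          apply intervalIntegral.integral_mono_on h1.le
            (hc.abs.intervalIntegrable) hI2
          intro t ht
          have ht0 : (0:ℝ) < t := lt_of_lt_of_le one_pos ht.1
          rw [abs_div, abs_of_pos (pow_pos ht0 2), div_le_iff₀ (pow_pos ht0 2),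
            inv_mul_cancel₀ (pow_pos ht0 2).ne']
          exact Real.abs_cos_le_one t
        have step3 : (∫ t in (1:ℝ)..x, (t^2)⁻¹) = 1 - x⁻¹ := by
          have h0 : (0:ℝ) ∉ Set.uIcc (1:ℝ) x := by
            rw [Set.uIcc_of_le h1.le]
            intro h
            exact absurd h.1 (by norm_num)
          have := integral_zpow (a := 1) (b := x) (n := -2)
            (Or.inr ⟨by norm_num, h0⟩)
          simp only [zpow_neg] at this ⊢
          norm_num at this ⊢
          exact this.trans (by ring)
        have step4 : (1:ℝ) - x⁻¹ ≤ 1 := by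
          have : (0:ℝ) < x⁻¹ := by positivity
          linarith
        linarith
      have hc1 : |Real.cos 1| ≤ 1 := Real.abs_cos_le_one 1
      rw [abs_le] at b1 b2 b3 hc1 ⊢
      constructor <;> [linarith [b1.1, b2.2, b3.2, hc1.1]; linarith [b1.2, b2.1, b3.1, hc1.2]]
  intro x
  rcases le_or_gt 0 x with hx | hx
  · exact key x hx
  · have : Si x = -Si (-x) := by
      rw [Si, Si]
      rw [show (∫ t in (0:ℝ)..(-x), _root_.sinc t) = ∫ t in (0:ℝ)..(-x), _root_.sinc (-t) from
        intervalIntegral.integral_congr (fun t _ => (sinc_even t).symm)]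
      rw [intervalIntegral.integral_comp_neg, intervalIntegral.integral_symm]
      simp
    rw [this, abs_neg]
    exact key (-x) (by linarith)

lemma si_scale (c R : ℝ) : (∫ t in (0:ℝ)..R, c * _root_.sinc (c*t)) = Si (c*R) := by
  rcases eq_or_ne c 0 with rfl | hc
  · simp [Si]
  · have := intervalIntegral.integral_comp_mul_left (a := 0) (b := R) (fun u => _root_.sinc u) hc
    rw [intervalIntegral.integral_const_mul, this]
    rw [smul_eq_mul, mul_zero]
    rw [← mul_assoc, mul_inv_cancel₀ hc, one_mul]
    rfl

lemma integral_sinc_scale {a : ℝ} (ha : a ≠ 0) (R : ℝ) :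
    (∫ t in (0:ℝ)..R, _root_.sinc (a*t)) = a⁻¹ * Si (a*R) := by
  rw [← si_scale a R, ← intervalIntegral.integral_const_mul]
  apply intervalIntegral.integral_congr
  intro t _
  field_simp

lemma tendsto_si_scale {c : ℝ} (hc : 0 < c) :
    Tendsto (fun R => Si (c*R)) atTop (nhds SiLim) :=
  tendsto_si.comp (Filter.tendsto_atTop_atTop_of_monotone
    (fun x y hxy => by nlinarith) (fun b => ⟨b/c, by rw [mul_div_cancel₀ _ hc.ne']⟩))


/-- Dirichlet kernel identity -/
lemma dirichlet_kernel (n : ℕ) (x : ℝ) :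
    Real.sin ((2*n+1)*x) = Real.sin x * (1 + 2 * ∑ j ∈ Finset.Icc 1 n, Real.cos (2*j*x)) := by
  induction n with
  | zero => simp
  | succ n ih =>
    have key : Real.sin ((2*((n:ℝ)+1)+1)*x) - Real.sin ((2*(n:ℝ)+1)*x)
        = 2 * Real.sin x * Real.cos (2*((n:ℝ)+1)*x) := by
      rw [Real.sin_sub_sin]
      ring_nf
    rw [Finset.sum_Icc_succ_top (by omega : 1 ≤ n+1)]
    push_cast at ih ⊢
    linear_combination ih + key

lemma integral_kernel (n : ℕ) :
    (∫ x in (0:ℝ)..(π/2), (1 + 2 * ∑ j ∈ Finset.Icc 1 n, Real.cos (2*j*x))) = π/2 := by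
  have hcos : ∀ j ∈ Finset.Icc 1 n, (∫ x in (0:ℝ)..(π/2), Real.cos (2*(j:ℝ)*x)) = 0 := by
    intro j hj
    have hj1 : 1 ≤ j := (Finset.mem_Icc.mp hj).1
    have h2j : (2*(j:ℝ)) ≠ 0 := by positivity
    rw [intervalIntegral.integral_comp_mul_left (fun u => Real.cos u) h2j]
    rw [integral_cos, mul_zero, Real.sin_zero,
      show 2*(j:ℝ)*(π/2) = j*π by ring, Real.sin_nat_mul_pi]
    simp
  have hcont : ∀ j : ℕ, Continuous (fun x : ℝ => Real.cos (2*(j:ℝ)*x)) := fun j =>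
    Real.continuous_cos.comp (continuous_const.mul continuous_id)
  have hg : Continuous (fun x : ℝ => ∑ j ∈ Finset.Icc 1 n, Real.cos (2*(j:ℝ)*x)) :=
    continuous_finset_sum _ (fun j _ => hcont j)
  rw [intervalIntegral.integral_add intervalIntegrable_const
      ((hg.intervalIntegrable _ _).const_mul 2)]
  rw [intervalIntegral.integral_const_mul,
    intervalIntegral.integral_finset_sum (μ := volume) (a := 0) (b := π/2)
      (f := fun (j : ℕ) (x : ℝ) => Real.cos (2*(j:ℝ)*x))
      (fun j _ => (hcont j).intervalIntegrable _ _)]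
  rw [Finset.sum_congr rfl hcos]
  simp [Real.pi_pos.le]

lemma tendsto_integral_sin_mul (g : ℝ → ℝ) (hg : Integrable g) :
    Tendsto (fun l : ℝ => ∫ v : ℝ, Real.sin (l*v) * g v) atTop (nhds 0) := by
  set f : ℝ → ℂ := fun v => (g v : ℂ) with hf
  have hfint : Integrable f := by
    rw [hf]
    apply Integrable.ofReal hg
  have hRL := Real.tendsto_integral_exp_smul_cocompact f
  have hmap : Tendsto (fun l : ℝ => l / (2*π)) atTop (cocompact ℝ) := by
    rw [cocompact_eq_atBot_atTop]
    apply Tendsto.mono_right _ le_sup_right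
    apply Tendsto.atTop_div_const (by positivity)
    exact tendsto_id
  have h2 := (hRL.comp hmap)
  have h3 : Tendsto (fun l : ℝ => (∫ v : ℝ, Real.fourierChar (-(v * (l/(2*π)))) • f v).im)
      atTop (nhds 0) := by
    have := (Complex.continuous_im.tendsto 0).comp h2
    exact this
  have key : ∀ l : ℝ, (∫ v : ℝ, Real.fourierChar (-(v * (l/(2*π)))) • f v).im
      = - ∫ v : ℝ, Real.sin (l*v) * g v := by
    intro l
    have hc : Continuous fun v : ℝ => Real.fourierChar (-(v * (l/(2*π)))) :=
      Real.continuous_fourierChar.comp (continuous_id.mul continuous_const).neg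
    have hconv : Integrable (fun v : ℝ => Real.fourierChar (-(v * (l/(2*π)))) • f v) := by
      apply Integrable.mono' hfint.norm
        (hc.aestronglyMeasurable.smul hfint.aestronglyMeasurable)
      filter_upwards with v
      show ‖Real.fourierChar (-(v * (l/(2*π)))) • f v‖ ≤ ‖f v‖
      rw [Circle.norm_smul]
    rw [show (∫ v : ℝ, Real.fourierChar (-(v * (l/(2*π)))) • f v).im
        = RCLike.im (K := ℂ) (∫ v : ℝ, Real.fourierChar (-(v * (l/(2*π)))) • f v) from rfl]
    rw [← integral_im hconv]
    rw [← MeasureTheory.integral_neg]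
    ·
      apply MeasureTheory.integral_congr_ae
      filter_upwards with v
      rw [Circle.smul_def, Real.fourierChar_apply]
      rw [show RCLike.im (K := ℂ) = Complex.im from rfl]
      simp only [hf]
      rw [Complex.exp_mul_I]
      rw [show 2*π*(-(v*(l/(2*π)))) = -(l*v) by field_simp]
      simp [Complex.add_im, Complex.mul_im, ← Complex.ofReal_mul,
        Complex.sin_ofReal_re, Complex.cos_ofReal_im]
  have h4 : Tendsto (fun l : ℝ => - ∫ v : ℝ, Real.sin (l*v) * g v) atTop (nhds 0) := by
    apply h3.congr
    intro l
    rw [key]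
  have := h4.neg
  simpa using this

noncomputable def gcorr : ℝ → ℝ := fun x => (Real.sin x - x)/(x * Real.sin x)


lemma gcorr_bound {x : ℝ} (hx : x ∈ Set.Ioc 0 (π/2)) : |gcorr x| ≤ 3 := by
  obtain ⟨hx0, hx2⟩ := hx
  have hsin : 0 < Real.sin x :=
    Real.sin_pos_of_pos_of_lt_pi hx0 (lt_of_le_of_lt hx2 (by linarith [Real.pi_pos]))
  have hxs : Real.sin x ≤ x := Real.sin_le hx0.le
  have habs : |gcorr x| = (x - Real.sin x)/(x * Real.sin x) := by
    unfold gcorr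
    rw [abs_div, abs_of_pos (mul_pos hx0 hsin),
      abs_of_nonpos (by linarith : Real.sin x - x ≤ 0), neg_sub]
  rw [habs, div_le_iff₀ (mul_pos hx0 hsin)]
  rcases le_or_gt x 1 with h1 | h1
  · have hcube : x - x^3/4 < Real.sin x := by have := Real.sin_gt_sub_cube hx0; nlinarith [pow_pos hx0 3]
    have hx2' : x^2 ≤ 1 := by nlinarith
    have hx3 : x^3 ≤ x := by nlinarith
    have hs34 : 3*x/4 ≤ Real.sin x := by linarith
    nlinarith
  · have hs1 : (3:ℝ)/4 ≤ Real.sin x := by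
      calc (3:ℝ)/4 = 1 - 1^3/4 := by norm_num
      _ ≤ Real.sin 1 := by linarith [Real.sin_gt_sub_cube one_pos]
      _ ≤ Real.sin x := by
          apply Real.strictMonoOn_sin.monotoneOn ?_ ?_ h1.le
          · constructor <;> [linarith [Real.pi_gt_three]; linarith [Real.pi_gt_three]]
          · constructor <;> [linarith [Real.pi_pos]; linarith]
    nlinarith

lemma gcorr_measurable : Measurable gcorr :=
  (Real.measurable_sin.sub measurable_id).div (measurable_id.mul Real.measurable_sin)

lemma silim_eq : SiLim = π/2 := by
  set gE : ℝ → ℝ := Set.indicator (Set.Ioc 0 (π/2)) gcorr with hgE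
  have hgEint : Integrable gE := by
    rw [hgE]
    apply (IntegrableOn.integrable_indicator _ measurableSet_Ioc)
    apply Integrable.mono' (g := fun _ => (3:ℝ))
      (integrableOn_const measure_Ioc_lt_top.ne)
      (gcorr_measurable.aestronglyMeasurable.restrict)
    filter_upwards [ae_restrict_mem measurableSet_Ioc] with x hxm
    rw [Real.norm_eq_abs]
    exact gcorr_bound hxm
  have hB : Tendsto (fun n : ℕ => ∫ v : ℝ, Real.sin ((2*n+1) * v) * gE v) atTop (nhds 0) := by
    apply (tendsto_integral_sin_mul gE hgEint).comp
    apply tendsto_atTop_atTop_of_monotone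
    · intro i j hij
      push_cast
      have : (i:ℝ) ≤ j := Nat.cast_le.mpr hij
      linarith
    · intro b
      obtain ⟨n, hn⟩ := exists_nat_ge b
      exact ⟨n, by push_cast; linarith⟩
  have hident : ∀ n : ℕ, Si ((2*n+1) * (π/2))
      = π/2 + ∫ v : ℝ, Real.sin ((2*n+1) * v) * gE v := by
    intro n
    have hc : (0:ℝ) < 2*n+1 := by positivity
    have h1 : Si ((2*n+1) * (π/2)) = ∫ x in (0:ℝ)..(π/2), (2*n+1) * _root_.sinc ((2*n+1)*x) :=
      (si_scale _ _).symm
    have h2 : (∫ x in (0:ℝ)..(π/2), (2*n+1) * _root_.sinc ((2*n+1)*x))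
        = ∫ x in (0:ℝ)..(π/2),
            ((1 + 2 * ∑ j ∈ Finset.Icc 1 n, Real.cos (2*j*x))
              + Real.sin ((2*n+1)*x) * gcorr x) := by
      apply intervalIntegral.integral_congr_ae
      rw [Set.uIoc_of_le (by positivity : (0:ℝ) ≤ π/2)]
      filter_upwards with x hx
      obtain ⟨hx0, hx2⟩ := hx
      have hsin : Real.sin x ≠ 0 :=
        (Real.sin_pos_of_pos_of_lt_pi hx0 (lt_of_le_of_lt hx2 (by linarith [Real.pi_pos]))).ne'
      rw [sinc_of_ne _ (mul_ne_zero hc.ne' hx0.ne')]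
      have hker := dirichlet_kernel n x
      unfold gcorr
      rw [hker]
      field_simp
      ring_nf
      simp only [mul_comm, mul_left_comm]
    have hKint : IntervalIntegrable
        (fun x => 1 + 2 * ∑ j ∈ Finset.Icc 1 n, Real.cos (2*(j:ℝ)*x)) volume 0 (π/2) := by
      apply Continuous.intervalIntegrable
      exact continuous_const.add (continuous_const.mul (continuous_finset_sum _
        (fun j _ => Real.continuous_cos.comp (continuous_const.mul continuous_id))))
    have hGint : IntervalIntegrable (fun x => Real.sin ((2*n+1)*x) * gcorr x)
        volume 0 (π/2) := by
      rw [intervalIntegrable_iff_integrableOn_Ioc_of_le (by positivity)]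
      apply Integrable.mono' (g := fun _ => (3:ℝ))
        (integrableOn_const measure_Ioc_lt_top.ne)
        (((Real.continuous_sin.comp (continuous_const.mul continuous_id)).measurable.mul
          gcorr_measurable).aestronglyMeasurable.restrict)
      filter_upwards [ae_restrict_mem measurableSet_Ioc] with x hxm
      rw [Real.norm_eq_abs]
      show |Real.sin ((2*n+1)*x) * gcorr x| ≤ 3
      rw [abs_mul]
      calc |Real.sin ((2*n+1)*x)| * |gcorr x| ≤ 1 * 3 :=
        mul_le_mul (Real.abs_sin_le_one _) (gcorr_bound hxm) (abs_nonneg _) zero_le_one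
      _ = 3 := by norm_num
    have h3 : (∫ v : ℝ, Real.sin ((2*n+1) * v) * gE v)
        = ∫ x in (0:ℝ)..(π/2), Real.sin ((2*n+1)*x) * gcorr x := by
      rw [hgE]
      rw [intervalIntegral.integral_of_le (by positivity : (0:ℝ) ≤ π/2)]
      rw [← MeasureTheory.integral_indicator measurableSet_Ioc]
      congr 1
      ext v
      rw [Set.indicator_apply, Set.indicator_apply]
      split <;> simp
    rw [h1, h2, intervalIntegral.integral_add hKint hGint, integral_kernel n, h3]
  have hlim1 : Tendsto (fun n : ℕ => Si ((2*n+1) * (π/2))) atTop (nhds (π/2)) := by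
    simp only [hident]
    have := hB.const_add (π/2)
    simpa using this
  have hlim2 : Tendsto (fun n : ℕ => Si ((2*n+1) * (π/2))) atTop (nhds SiLim) := by
    apply tendsto_si.comp
    apply tendsto_atTop_atTop_of_monotone
    · intro i j hij
      have : (i:ℝ) ≤ j := Nat.cast_le.mpr hij
      nlinarith [Real.pi_pos]
    · intro b
      obtain ⟨n, hn⟩ := exists_nat_ge b
      refine ⟨n, ?_⟩
      nlinarith [Real.pi_gt_three, (by positivity : (0:ℝ) ≤ (n:ℝ))]
  exact (tendsto_nhds_unique hlim2 hlim1)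


lemma tendsto_si' : Tendsto Si atTop (nhds (π/2)) := silim_eq ▸ tendsto_si

lemma tendsto_si_scale' {c : ℝ} (hc : 0 < c) :
    Tendsto (fun R => Si (c*R)) atTop (nhds (π/2)) := silim_eq ▸ tendsto_si_scale hc

lemma continuous_si : Continuous Si :=
  intervalIntegral.continuous_primitive (fun a b => _root_.continuous_sinc.intervalIntegrable a b) 0

noncomputable def P (a : ℕ → ℝ) (m : ℕ) (t : ℝ) : ℝ :=
  ∏ k ∈ Finset.range (m+1), _root_.sinc (a k * t)

noncomputable def G (a : ℕ → ℝ) (m : ℕ) (b R : ℝ) : ℝ :=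
  ∫ t in (0:ℝ)..R, Real.cos (b*t) * P a m t

lemma continuous_P (a : ℕ → ℝ) (m : ℕ) : Continuous (P a m) :=
  continuous_finset_prod _ (fun k _ => _root_.continuous_sinc.comp (continuous_const.mul continuous_id))

lemma abs_P_le_one (a : ℕ → ℝ) (m : ℕ) (t : ℝ) : |P a m t| ≤ 1 := by
  rw [P, Finset.abs_prod]
  exact Finset.prod_le_one (fun _ _ => abs_nonneg _) (fun k _ => _root_.abs_sinc_le_one _)

lemma mul_sinc (c t : ℝ) (ht : t ≠ 0) : c * _root_.sinc (c*t) = Real.sin (c*t) / t := by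
  rcases eq_or_ne c 0 with rfl | hc
  · simp
  · rw [sinc_of_ne _ (mul_ne_zero hc ht)]
    field_simp


lemma cos_mul_sinc (a b t : ℝ) (ha : a ≠ 0) :
    Real.cos (b*t) * _root_.sinc (a*t)
      = (1/(2*a)) * ((a+b) * _root_.sinc ((a+b)*t) + (a-b) * _root_.sinc ((a-b)*t)) := by
  rcases eq_or_ne t 0 with rfl | ht
  · simp [_root_.sinc_zero]
    field_simp
    ring
  · rw [mul_sinc _ _ ht, mul_sinc _ _ ht, sinc_of_ne _ (mul_ne_zero ha ht)]
    rw [show (a+b)*t = a*t + b*t by ring, show (a-b)*t = a*t - b*t by ring,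
      Real.sin_add, Real.sin_sub]
    field_simp
    ring

lemma cont_mul_sinc (c : ℝ) : Continuous (fun x : ℝ => c * _root_.sinc (c*x)) :=
  continuous_const.mul (_root_.continuous_sinc.comp (continuous_const.mul continuous_id))

lemma G_zero_eq (a : ℕ → ℝ) (ha : a 0 ≠ 0) (b R : ℝ) :
    G a 0 b R = (1/(2 * a 0)) * (Si ((a 0 + b)*R) + Si ((a 0 - b)*R)) := by
  rw [G]
  have h1 : ∀ t : ℝ, Real.cos (b*t) * P a 0 t
      = (1/(2*a 0)) * ((a 0+b) * _root_.sinc ((a 0+b)*t) + (a 0-b) * _root_.sinc ((a 0-b)*t)) := by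
    intro t
    rw [P, Finset.prod_range_one]
    exact cos_mul_sinc (a 0) b t ha
  simp_rw [h1]
  rw [intervalIntegral.integral_const_mul]
  rw [intervalIntegral.integral_add
    ((cont_mul_sinc (a 0 + b)).intervalIntegrable _ _)
    ((cont_mul_sinc (a 0 - b)).intervalIntegrable _ _)]
  rw [si_scale, si_scale]

lemma integral_cos_box (b a' t : ℝ) (ha' : a' ≠ 0) :
    (∫ s in (b - a')..(b + a'), Real.cos (s*t))
      = 2 * a' * (Real.cos (b*t) * _root_.sinc (a'*t)) := by
  rcases eq_or_ne t 0 with rfl | ht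
  · simp [_root_.sinc_zero]
    ring
  · rw [intervalIntegral.integral_comp_mul_right (fun u => Real.cos u) ht]
    rw [integral_cos, smul_eq_mul]
    rw [Real.sin_sub_sin]
    rw [show ((b+a')*t + (b-a')*t)/2 = b*t by ring, show ((b+a')*t - (b-a')*t)/2 = a'*t by ring]
    rw [sinc_of_ne _ (mul_ne_zero ha' ht)]
    field_simp

lemma interval_swap (f : ℝ → ℝ → ℝ) (hf : Continuous (Function.uncurry f)) (C : ℝ)
    (hC : ∀ s t, |f s t| ≤ C) {s1 s2 t1 t2 : ℝ} (hs : s1 ≤ s2) (ht : t1 ≤ t2) :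
    (∫ t in t1..t2, ∫ s in s1..s2, f s t) = ∫ s in s1..s2, ∫ t in t1..t2, f s t := by
  rw [intervalIntegral.integral_of_le ht, intervalIntegral.integral_of_le hs]
  simp_rw [intervalIntegral.integral_of_le hs, intervalIntegral.integral_of_le ht]
  haveI h1 : IsFiniteMeasure (volume.restrict (Set.Ioc t1 t2)) :=
    ⟨by rw [Measure.restrict_apply_univ]; exact measure_Ioc_lt_top⟩
  haveI h2 : IsFiniteMeasure (volume.restrict (Set.Ioc s1 s2)) :=
    ⟨by rw [Measure.restrict_apply_univ]; exact measure_Ioc_lt_top⟩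
  apply MeasureTheory.integral_integral_swap
  apply Integrable.mono' (g := fun _ => C) (integrable_const C)
  · exact (hf.comp (continuous_snd.prodMk continuous_fst)).aestronglyMeasurable
  · filter_upwards with p
    rw [Real.norm_eq_abs]
    exact hC p.2 p.1

lemma G_succ_eq (a : ℕ → ℝ) (m : ℕ) (ha' : 0 < a (m+1)) (b : ℝ) {R : ℝ} (hR : 0 ≤ R) :
    G a (m+1) b R = (1/(2 * a (m+1))) *
      ∫ s in (b - a (m+1))..(b + a (m+1)), G a m s R := by
  have key : ∀ t : ℝ, Real.cos (b*t) * P a (m+1) t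
      = (1/(2 * a (m+1))) * ∫ s in (b - a (m+1))..(b + a (m+1)), Real.cos (s*t) * P a m t := by
    intro t
    rw [intervalIntegral.integral_mul_const, integral_cos_box b _ t ha'.ne']
    rw [P, Finset.prod_range_succ, ← P]
    field_simp
  rw [G]
  simp_rw [key]
  rw [intervalIntegral.integral_const_mul]
  congr 1
  have hcont : Continuous (Function.uncurry (fun s t : ℝ => Real.cos (s*t) * P a m t)) := by
    apply Continuous.mul
    · exact Real.continuous_cos.comp (continuous_fst.mul continuous_snd)
    · exact (continuous_P a m).comp continuous_snd
  have hb : ∀ s t : ℝ, |Real.cos (s*t) * P a m t| ≤ 1 := by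
    intro s t
    rw [abs_mul]
    calc |Real.cos (s*t)| * |P a m t| ≤ 1 * 1 :=
      mul_le_mul (Real.abs_cos_le_one _) (abs_P_le_one a m t) (abs_nonneg _) zero_le_one
    _ = 1 := by norm_num
  exact interval_swap _ hcont 1 hb (by linarith) hR



lemma borwein_induction (a : ℕ → ℝ) (m : ℕ) (hpos : ∀ k ≤ m, 0 < a k) (h0 : 0 < a 0) :
    (∀ R : ℝ, 0 ≤ R → Continuous (fun b => G a m b R)) ∧
    (∀ b R : ℝ, 0 ≤ R → |G a m b R| ≤ 4 / a 0) ∧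
    (∀ b : ℝ, |b| + (∑ k ∈ Finset.Icc 1 m, a k) < a 0 →
      Tendsto (fun R => G a m b R) atTop (nhds (π/(2 * a 0)))) := by
  induction m with
  | zero =>
    refine ⟨fun R _ => ?_, fun b R _ => ?_, fun b hb => ?_⟩
    · simp_rw [G_zero_eq a h0.ne']
      apply continuous_const.mul
      apply Continuous.add
      · exact continuous_si.comp ((continuous_const.add continuous_id).mul continuous_const)
      · exact continuous_si.comp ((continuous_const.sub continuous_id).mul continuous_const)
    · rw [G_zero_eq a h0.ne']
      rw [abs_mul, abs_of_pos (by positivity : (0:ℝ) < 1/(2 * a 0))]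
      calc 1/(2 * a 0) * |Si ((a 0 + b)*R) + Si ((a 0 - b)*R)|
          ≤ 1/(2 * a 0) * (4 + 4) := by
            apply mul_le_mul_of_nonneg_left _ (by positivity)
            calc |Si ((a 0 + b)*R) + Si ((a 0 - b)*R)|
                ≤ |Si ((a 0 + b)*R)| + |Si ((a 0 - b)*R)| := abs_add_le _ _
            _ ≤ 4 + 4 := add_le_add (abs_si_le _) (abs_si_le _)
      _ = 4 / a 0 := by field_simp; ring
    · simp only [Finset.Icc_self, Finset.Icc_eq_empty_of_lt (by norm_num : (0:ℕ) < 1),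
        Finset.sum_empty, add_zero] at hb
      have hb1 : 0 < a 0 + b := by cases abs_lt.mp hb; linarith
      have hb2 : 0 < a 0 - b := by cases abs_lt.mp hb; linarith
      have h1 := (tendsto_si_scale' hb1).add (tendsto_si_scale' hb2)
      have h2 := h1.const_mul (1/(2 * a 0))
      simp_rw [← G_zero_eq a h0.ne'] at h2
      convert h2 using 2
      field_simp
      norm_num
  | succ m ih =>
    obtain ⟨ihc, ihb, ihl⟩ := ih (fun k hk => hpos k (Nat.le_succ_of_le hk))
    have ha' : 0 < a (m+1) := hpos (m+1) le_rfl
    have hGrw : ∀ b : ℝ, ∀ R : ℝ, 0 ≤ R → G a (m+1) b R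
        = (1/(2 * a (m+1))) * ∫ s in (b - a (m+1))..(b + a (m+1)), G a m s R :=
      fun b R hR => G_succ_eq a m ha' b hR
    refine ⟨fun R hR => ?_, fun b R hR => ?_, fun b hb => ?_⟩
    · have heq : (fun b => G a (m+1) b R) = fun b => (1/(2 * a (m+1))) *
          ((∫ s in (0:ℝ)..(b + a (m+1)), G a m s R)
            - ∫ s in (0:ℝ)..(b - a (m+1)), G a m s R) := by
        funext b
        rw [hGrw b R hR]
        congr 1
        rw [← intervalIntegral.integral_add_adjacent_intervals
          (a := 0) (b := b - a (m+1)) (c := b + a (m+1))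
          (((ihc R hR)).intervalIntegrable _ _) ((ihc R hR).intervalIntegrable _ _)]
        ring
      rw [heq]
      have hprim : Continuous (fun x : ℝ => ∫ s in (0:ℝ)..x, G a m s R) :=
        intervalIntegral.continuous_primitive
          (fun u v => (ihc R hR).intervalIntegrable u v) 0
      exact continuous_const.mul ((hprim.comp (continuous_id.add continuous_const)).sub
        (hprim.comp (continuous_id.sub continuous_const)))
    · rw [hGrw b R hR, abs_mul, abs_of_pos (by positivity : (0:ℝ) < 1/(2 * a (m+1)))]
      have hbd : ‖∫ s in (b - a (m+1))..(b + a (m+1)), G a m s R‖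
          ≤ (4 / a 0) * |(b + a (m+1)) - (b - a (m+1))| := by
        apply intervalIntegral.norm_integral_le_of_norm_le_const
        intro s _
        rw [Real.norm_eq_abs]
        exact ihb s R hR
      rw [Real.norm_eq_abs] at hbd
      calc 1/(2 * a (m+1)) * |∫ s in (b - a (m+1))..(b + a (m+1)), G a m s R|
          ≤ 1/(2 * a (m+1)) * ((4 / a 0) * |(b + a (m+1)) - (b - a (m+1))|) :=
            mul_le_mul_of_nonneg_left hbd (by positivity)
      _ = 4 / a 0 := by
          rw [show (b + a (m+1)) - (b - a (m+1)) = 2 * a (m+1) by ring,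
            abs_of_pos (by positivity)]
          field_simp
    · rw [Finset.sum_Icc_succ_top (by omega : 1 ≤ m+1)] at hb
      have hb' : ∀ s ∈ Set.uIoc (b - a (m+1)) (b + a (m+1)),
          |s| + (∑ k ∈ Finset.Icc 1 m, a k) < a 0 := by
        intro s hs
        rw [Set.uIoc_of_le (by linarith)] at hs
        obtain ⟨hs1, hs2⟩ := hs
        have : |s| ≤ |b| + a (m+1) := by
          rw [abs_le]
          constructor
          · have := neg_abs_le b
            linarith
          · have := le_abs_self b
            linarith
        linarith
      have hdct : Tendsto (fun R => ∫ s in (b - a (m+1))..(b + a (m+1)), G a m s R)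
          atTop (nhds (∫ s in (b - a (m+1))..(b + a (m+1)), (fun _ => π/(2 * a 0)) s)) := by
        apply intervalIntegral.tendsto_integral_filter_of_dominated_convergence
          (bound := fun _ => 4 / a 0)
        · filter_upwards [eventually_ge_atTop (0:ℝ)] with R hR
          exact ((ihc R hR).comp continuous_id).aestronglyMeasurable.restrict
        · filter_upwards [eventually_ge_atTop (0:ℝ)] with R hR
          filter_upwards with s _
          rw [Real.norm_eq_abs]
          exact ihb s R hR
        · exact intervalIntegrable_const
        · filter_upwards with s
          intro hs
          exact ihl s (hb' s hs)
      rw [intervalIntegral.integral_const, smul_eq_mul,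
        show (b + a (m+1)) - (b - a (m+1)) = 2 * a (m+1) by ring] at hdct
      have h2 := hdct.const_mul (1/(2 * a (m+1)))
      have heq : (1/(2 * a (m+1))) * (2 * a (m+1) * (π/(2 * a 0))) = π/(2 * a 0) := by
        field_simp
      rw [heq] at h2
      apply h2.congr'
      filter_upwards [eventually_ge_atTop (0:ℝ)] with R hR
      rw [hGrw b R hR]

/-- If `a_0 ≥ a_1 ≥ … ≥ a_n > 0` then `τ_0 = π/(2 a_0)`, and
`τ_n = π/(2 a_0)` whenever `∑_{k=1}^n a_k ≤ a_0`, where the improper integrals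
are limits of `∫_0^R` as `R → ∞`. -/
theorem tau_eq (n : ℕ) (a : ℕ → ℝ)
    (hpos : ∀ k ≤ n, 0 < a k)
    (hmono : ∀ k, k + 1 ≤ n → a (k + 1) ≤ a k)
    (hsum : (∑ k ∈ Finset.Icc 1 n, a k) ≤ a 0) :
    Filter.Tendsto (fun R : ℝ => ∫ t in (0:ℝ)..R, _root_.sinc (a 0 * t))
      Filter.atTop (nhds (π / (2 * a 0))) ∧
    Filter.Tendsto
      (fun R : ℝ => ∫ t in (0:ℝ)..R, ∏ k ∈ Finset.range (n + 1), _root_.sinc (a k * t))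
      Filter.atTop (nhds (π / (2 * a 0))) := by
  have h0 : 0 < a 0 := hpos 0 (Nat.zero_le n)
  have part1 : Filter.Tendsto (fun R : ℝ => ∫ t in (0:ℝ)..R, _root_.sinc (a 0 * t))
      Filter.atTop (nhds (π / (2 * a 0))) := by
    have h1 : ∀ R : ℝ, (∫ t in (0:ℝ)..R, _root_.sinc (a 0 * t)) = (a 0)⁻¹ * Si (a 0 * R) :=
      integral_sinc_scale h0.ne'
    simp_rw [h1]
    have h2 := (tendsto_si_scale' h0).const_mul ((a 0)⁻¹)
    have heq : (a 0)⁻¹ * (π/2) = π/(2 * a 0) := by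
      rw [div_mul_eq_div_div_swap, div_div]
      ring
    rw [heq] at h2
    exact h2
  refine ⟨part1, ?_⟩
  cases n with
  | zero =>
    have : ∀ R : ℝ, (∫ t in (0:ℝ)..R, ∏ k ∈ Finset.range 1, _root_.sinc (a k * t))
        = ∫ t in (0:ℝ)..R, _root_.sinc (a 0 * t) := by
      intro R
      apply intervalIntegral.integral_congr
      intro t _
      simp
    simp_rw [this]
    exact part1
  | succ m =>
    obtain ⟨ihc, ihb, ihl⟩ := borwein_induction a m
      (fun k hk => hpos k (Nat.le_succ_of_le hk)) h0
    have ha' : 0 < a (m+1) := hpos (m+1) le_rfl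
    have htau : ∀ R : ℝ, (∫ t in (0:ℝ)..R, ∏ k ∈ Finset.range (m+1+1), _root_.sinc (a k * t))
        = G a (m+1) 0 R := by
      intro R
      rw [G]
      apply intervalIntegral.integral_congr
      intro t _
      simp only [P, zero_mul, Real.cos_zero, one_mul]
    have hb' : ∀ᵐ s : ℝ ∂(volume : Measure ℝ), s ∈ Set.uIoc (0 - a (m+1)) (0 + a (m+1)) →
        Tendsto (fun R => G a m s R) atTop (nhds (π/(2 * a 0))) := by
      have hae : ∀ᵐ s : ℝ ∂(volume : Measure ℝ), s ≠ a (m+1) := by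
        rw [ae_iff]
        have : {s : ℝ | ¬ s ≠ a (m+1)} = {a (m+1)} := by ext s; simp
        rw [this]
        exact measure_singleton _
      filter_upwards [hae] with s hs hmem
      rw [Set.uIoc_of_le (by linarith), zero_sub, zero_add] at hmem
      obtain ⟨h1, h2⟩ := hmem
      have habs : |s| < a (m+1) := by
        rw [abs_lt]
        exact ⟨h1, lt_of_le_of_ne h2 hs⟩
      apply ihl
      rw [Finset.sum_Icc_succ_top (by omega : 1 ≤ m+1)] at hsum
      linarith
    have hdct : Tendsto (fun R => ∫ s in (0 - a (m+1))..(0 + a (m+1)), G a m s R)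
        atTop (nhds (∫ s in (0 - a (m+1))..(0 + a (m+1)), (fun _ => π/(2 * a 0)) s)) := by
      apply intervalIntegral.tendsto_integral_filter_of_dominated_convergence
        (bound := fun _ => 4 / a 0)
      · filter_upwards [eventually_ge_atTop (0:ℝ)] with R hR
        exact ((ihc R hR).comp continuous_id).aestronglyMeasurable.restrict
      · filter_upwards [eventually_ge_atTop (0:ℝ)] with R hR
        filter_upwards with s _
        rw [Real.norm_eq_abs]
        exact ihb s R hR
      · exact intervalIntegrable_const
      · exact hb'
    rw [intervalIntegral.integral_const, smul_eq_mul,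
      show (0 + a (m+1)) - (0 - a (m+1)) = 2 * a (m+1) by ring] at hdct
    have h2 := hdct.const_mul (1/(2 * a (m+1)))
    have heq : (1/(2 * a (m+1))) * (2 * a (m+1) * (π/(2 * a 0))) = π/(2 * a 0) := by
      field_simp
    rw [heq] at h2
    apply h2.congr'
    filter_upwards [eventually_ge_atTop (0:ℝ)] with R hR
    rw [htau R, G_succ_eq a m ha' 0 hR]
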